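/- Let W be a Coxeter group, J ⊆ S, s a simple reflection, v ∈ W and τ ∈ W/W_J such that v < sv, svW_J ≤ τ, and sτ ≤ τ. Set y = up(sv, τ) and w = up(v, τ). Then either y = w, or y = sw > w; moreover the latter can occur only if sτ = τ. -/

import Mathlib

namespace KMChev

open CoxeterSystem

variable {B W : Type*} [Group W] {M : CoxeterMatrix B}

/-- Bruhat covering relation: `w = v t` for a reflection `t` and `ℓ(w) = ℓ(v) + 1`. -/
def BruhatCov (cs : CoxeterSystem M W) (v w : W) : Prop :=
  (∃ t : W, cs.IsReflection t ∧ w = v * t) ∧ cs.length w = cs.length v + 1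

/-- The (strong) Bruhat order on a Coxeter group. -/
def BruhatLE (cs : CoxeterSystem M W) : W → W → Prop :=
  Relation.ReflTransGen (BruhatCov cs)

/-- Strict Bruhat order. -/
def BruhatLT (cs : CoxeterSystem M W) (v w : W) : Prop :=
  BruhatLE cs v w ∧ v ≠ w

/-- The standard parabolic subgroup `W_J` generated by the simple reflections in `J`. -/
def WJ (cs : CoxeterSystem M W) (J : Set B) : Subgroup W :=
  Subgroup.closure (cs.simple '' J)

/-- The set `W^J` of minimal length coset representatives:
`w` with `ℓ(w s_j) > ℓ(w)` for all `j ∈ J`. -/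
def MinRep (cs : CoxeterSystem M W) (J : Set B) : Set W :=
  {w : W | ∀ j ∈ J, cs.length w < cs.length (w * cs.simple j)}

/-- The Bruhat order on `W/W_J`, transported from `W^J` via `w ↦ w W_J`. -/
def CosetLE (cs : CoxeterSystem M W) (J : Set B) (σ τ : W ⧸ WJ cs J) : Prop :=
  ∃ v w : W, v ∈ MinRep cs J ∧ w ∈ MinRep cs J ∧
    (QuotientGroup.mk v : W ⧸ WJ cs J) = σ ∧ (QuotientGroup.mk w : W ⧸ WJ cs J) = τ ∧
    BruhatLE cs v w

/-- Strict Bruhat order on `W/W_J`. -/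
def CosetLT (cs : CoxeterSystem M W) (J : Set B) (σ τ : W ⧸ WJ cs J) : Prop :=
  CosetLE cs J σ τ ∧ σ ≠ τ

end KMChev



namespace KMChev

open CoxeterSystem List Classical

noncomputable section

variable {B W : Type*} [Group W] {M : CoxeterMatrix B} (cs : CoxeterSystem M W)

local prefix:100 "s" => cs.simple
local prefix:100 "π" => cs.wordProd
local prefix:100 "ℓ" => cs.length
local prefix:100 "ris" => cs.rightInvSeq

theorem simple_conj_eq_simple_iff (i : B) (x : W) :
    (s i * x * s i = s i) ↔ x = s i := by
  constructor
  · intro hc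
    have := congrArg (fun z => s i * z * s i) hc
    simpa [mul_assoc, cs.simple_mul_simple_cancel_left,
      cs.simple_mul_simple_cancel_right] using this
  · intro hc; rw [hc, cs.simple_mul_simple_cancel_right]

/-- The basic involution used in the reflection-parity representation. -/
def refPermFun (i : B) : W × ZMod 2 → W × ZMod 2 :=
  fun p => (s i * p.1 * s i, p.2 + if p.1 = s i then 1 else 0)

theorem refPermFun_involutive (i : B) : Function.Involutive (refPermFun cs i) := by
  intro p
  have h2 : ∀ e : ZMod 2, e + 1 + 1 = e := by decide
  simp only [refPermFun, simple_conj_eq_simple_iff]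
  ext
  · show s i * (s i * p.1 * s i) * s i = p.1
    rw [← mul_assoc, ← mul_assoc, cs.simple_mul_simple_self, one_mul, mul_assoc,
      cs.simple_mul_simple_self, mul_one]
  · show p.2 + _ + _ = p.2
    by_cases h : p.1 = s i
    · simp only [h, if_true, h2]
    · simp only [h, if_false, add_zero]

/-- The involution as a permutation. -/
def refPerm (i : B) : Equiv.Perm (W × ZMod 2) :=
  (refPermFun_involutive cs i).toPerm

theorem refPerm_apply (i : B) (p : W × ZMod 2) :
    refPerm cs i p = (s i * p.1 * s i, p.2 + if p.1 = s i then 1 else 0) := rfl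

private theorem group_aux1 {a b x : W} (ha : a * a = 1) (hb : b * b = 1) (d : ℕ) :
    (a * (b * x * b) * a = (b * a) ^ d * b) ↔ x = (b * a) ^ (d + 2) * b := by
  have hai : a⁻¹ = a := inv_eq_of_mul_eq_one_right ha
  have hbi : b⁻¹ = b := inv_eq_of_mul_eq_one_right hb
  have hq : a * (b * x * b) * a = (b * a)⁻¹ * x * (b * a) := by
    rw [mul_inv_rev, hai, hbi]; group
  have e3 : (b * a) * ((b * a) ^ d * b) * (b * a)⁻¹ = (b * a) ^ (d + 2) * b := by
    rw [mul_inv_rev, hai, hbi]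
    calc b * a * ((b * a) ^ d * b) * (a * b)
        = (b * a) ^ (d + 1) * (b * (a * b)) := by rw [pow_succ']; group
      _ = (b * a) ^ (d + 1) * (b * a * b) := by rw [mul_assoc]
      _ = (b * a) ^ (d + 2) * b := by rw [pow_succ _ (d+1)]; group
  rw [hq, mul_assoc, inv_mul_eq_iff_eq_mul, ← eq_mul_inv_iff_mul_eq, e3]

theorem refPerm_pow_apply (i j : B) (k : ℕ) (p : W × ZMod 2) :
    ((refPerm cs i * refPerm cs j) ^ k) p =
      (((s j * s i) ^ k)⁻¹ * p.1 * (s j * s i) ^ k,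
        p.2 + ∑ d ∈ Finset.range (2 * k), if p.1 = (s j * s i) ^ d * s j then 1 else 0) := by
  induction k generalizing p with
  | zero => simp
  | succ k ih =>
    have ha : s i * s i = 1 := cs.simple_mul_simple_self i
    have hb : s j * s j = 1 := cs.simple_mul_simple_self j
    rw [pow_succ, Equiv.Perm.mul_apply, Equiv.Perm.mul_apply, refPerm_apply, refPerm_apply]
    dsimp only
    rw [ih]
    dsimp only
    have c1 : ((s j * p.1 * s j : W) = s i) ↔ p.1 = (s j * s i) ^ 1 * s j := by
      rw [pow_one]
      constructor
      · intro h
        have := congrArg (fun z => s j * z * s j) h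
        simpa [mul_assoc, cs.simple_mul_simple_cancel_left,
          cs.simple_mul_simple_cancel_right] using this
      · intro h
        rw [h, ← mul_assoc, ← mul_assoc, hb, one_mul, mul_assoc, hb, mul_one]
    have c0 : (p.1 = s j) ↔ p.1 = (s j * s i) ^ 0 * s j := by rw [pow_zero, one_mul]
    have e1 : ∑ d ∈ Finset.range (2 * k),
          (if (s i * (s j * p.1 * s j) * s i : W) = (s j * s i) ^ d * s j then (1 : ZMod 2) else 0)
        = ∑ d ∈ Finset.range (2 * k),
          if p.1 = (s j * s i) ^ (d + 2) * s j then (1 : ZMod 2) else 0 :=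
      Finset.sum_congr rfl (fun d _ => if_congr (group_aux1 ha hb d) rfl rfl)
    ext
    · show (((s j * s i) ^ k)⁻¹ * (s i * (s j * p.1 * s j) * s i) * (s j * s i) ^ k : W) = _
      have : (s i * (s j * p.1 * s j) * s i : W) = (s j * s i)⁻¹ * p.1 * (s j * s i) := by
        rw [mul_inv_rev, cs.inv_simple, cs.inv_simple]; group
      rw [this]
      generalize (s j * s i : W) = q
      group
    · show _ + ∑ d ∈ Finset.range (2 * k), _ = _
      rw [e1, c1, c0]
      conv_rhs => rw [show 2 * (k + 1) = 2 * k + 1 + 1 by ring, Finset.sum_range_succ',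
        Finset.sum_range_succ']
      have e2 : ∑ d ∈ Finset.range (2 * k),
            (if p.1 = (s j * s i) ^ (d + 1 + 1) * s j then (1 : ZMod 2) else 0)
          = ∑ d ∈ Finset.range (2 * k),
            if p.1 = (s j * s i) ^ (d + 2) * s j then (1 : ZMod 2) else 0 :=
        Finset.sum_congr rfl (fun d _ => rfl)
      rw [e2]
      ring

end

end KMChev

namespace KMChev

open CoxeterSystem List Classical

noncomputable section

variable {B W : Type*} [Group W] {M : CoxeterMatrix B} (cs : CoxeterSystem M W)

local prefix:100 "s" => cs.simple
local prefix:100 "π" => cs.wordProd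
local prefix:100 "ℓ" => cs.length
local prefix:100 "ris" => cs.rightInvSeq

theorem refPerm_liftable : CoxeterMatrix.IsLiftable M (refPerm cs) := by
  intro i j
  have hpow : ((s j * s i) ^ M i j : W) = 1 := cs.simple_mul_simple_pow' i j
  ext p
  · show (((refPerm cs i * refPerm cs j) ^ M i j) p).1 = p.1
    rw [refPerm_pow_apply]
    dsimp only
    rw [hpow, inv_one, one_mul, mul_one]
  · show (((refPerm cs i * refPerm cs j) ^ M i j) p).2 = p.2
    rw [refPerm_pow_apply]
    dsimp only
    have he : ∀ d : ℕ, (s j * s i : W) ^ (M i j + d) = (s j * s i) ^ d := by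
      intro d
      rw [pow_add, hpow, one_mul]
    have hsum2 : ∀ d ∈ Finset.range (M i j),
        (if p.1 = (s j * s i) ^ (M i j + d) * s j then (1 : ZMod 2) else 0)
          = (if p.1 = (s j * s i) ^ d * s j then 1 else 0) := fun d _ => by rw [he d]
    have : ∑ d ∈ Finset.range (2 * M i j),
        (if p.1 = (s j * s i) ^ d * s j then (1 : ZMod 2) else 0) = 0 := by
      rw [two_mul, Finset.sum_range_add, Finset.sum_congr rfl hsum2]
      have h2 : ∀ e : ZMod 2, e + e = 0 := by decide
      exact h2 _
    rw [this, add_zero]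

/-- The reflection-parity representation. -/
def refRep : W →* Equiv.Perm (W × ZMod 2) := cs.lift ⟨refPerm cs, refPerm_liftable cs⟩

theorem refRep_simple (i : B) : refRep cs (s i) = refPerm cs i :=
  cs.lift_apply_simple (refPerm_liftable cs) i

theorem refRep_wordProd_apply (ω : List B) (p : W × ZMod 2) :
    refRep cs (π ω) p = ((π ω) * p.1 * (π ω)⁻¹,
      p.2 + ((ris ω).count p.1 : ZMod 2)) := by
  induction ω generalizing p with
  | nil => simp [refRep]
  | cons i ω ih =>
    rw [cs.wordProd_cons, map_mul, Equiv.Perm.mul_apply, ih, refRep_simple, refPerm_apply]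
    dsimp only
    rw [rightInvSeq]
    ext
    · show (s i * (π ω * p.1 * (π ω)⁻¹) * s i : W) = _
      rw [mul_inv_rev, cs.inv_simple]
      group
    · show _ + _ = _
      rw [List.count_cons]
      by_cases hc : p.1 = (π ω)⁻¹ * s i * π ω
      · have h2 : (π ω * p.1 * (π ω)⁻¹ : W) = s i := by rw [hc]; group
        rw [if_pos h2, if_pos (by simpa using hc.symm)]
        push_cast
        ring
      · have h2 : ¬ ((π ω * p.1 * (π ω)⁻¹ : W) = s i) := by
          intro h
          apply hc
          have := congrArg (fun z => (π ω)⁻¹ * z * (π ω)) h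
          rw [show ((π ω)⁻¹ * (π ω * p.1 * (π ω)⁻¹) * (π ω) : W) = p.1 from by group] at this
          exact this
        have hne : ¬ ((π ω)⁻¹ * s i * π ω = p.1) := fun h => hc h.symm
        rw [if_neg h2, if_neg (by simpa using hne)]
        push_cast
        ring

/-- Parity of the number of occurrences of `t` in a right inversion sequence of a word for `w`. -/
def refParity (w t : W) : ZMod 2 := (refRep cs w (t, 0)).2

theorem refParity_eq_count (ω : List B) (t : W) :
    refParity cs (π ω) t = ((ris ω).count t : ZMod 2) := by
  rw [refParity, refRep_wordProd_apply]
  dsimp only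
  rw [zero_add]

theorem refRep_apply_fst (w t : W) : (refRep cs w (t, 0)).1 = w * t * w⁻¹ := by
  obtain ⟨ω, _, rfl⟩ := cs.exists_reduced_word' w
  rw [refRep_wordProd_apply]

theorem refRep_apply (w : W) (p : W × ZMod 2) :
    refRep cs w p = (w * p.1 * w⁻¹, p.2 + refParity cs w p.1) := by
  obtain ⟨ω, -, rfl⟩ := cs.exists_reduced_word' w
  rw [refRep_wordProd_apply, refParity_eq_count]

theorem refParity_mul (u v t : W) :
    refParity cs (u * v) t = refParity cs v t + refParity cs u (v * t * v⁻¹) := by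
  have h1 : refRep cs (u * v) (t, 0) = refRep cs u (refRep cs v (t, 0)) := by
    rw [map_mul]; rfl
  rw [refParity, h1, refRep_apply cs v, refRep_apply cs u]
  dsimp only
  rw [zero_add]

theorem refParity_self (t : W) (ht : cs.IsReflection t) : refParity cs t t = 1 := by
  obtain ⟨x, i, rfl⟩ := ht
  obtain ⟨ρ, -, rfl⟩ := cs.exists_reduced_word' x
  induction ρ with
  | nil =>
    simp only [wordProd_nil, one_mul, inv_one, mul_one]
    have h := refParity_eq_count cs [i] (s i)
    rw [cs.wordProd_singleton] at h
    rw [h]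
    simp [rightInvSeq]
  | cons j ρ ih =>
    rw [cs.wordProd_cons]
    set t' : W := π ρ * s i * (π ρ)⁻¹ with ht'
    have hre : (s j * π ρ * s i * (s j * π ρ)⁻¹ : W) = s j * t' * s j := by
      rw [mul_inv_rev, cs.inv_simple, ht']; group
    rw [hre]
    set t : W := s j * t' * s j with htdef
    have hsplit : (t : W) = s j * (t' * s j) := by rw [htdef]; group
    have hrep : refRep cs t (t, 0)
        = refRep cs (s j) (refRep cs t' (refRep cs (s j) (t, 0))) := by
      rw [hsplit, map_mul, map_mul]; rfl
    have s1 : refRep cs (s j) (t, (0 : ZMod 2))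
        = (t', 0 + if t = s j then 1 else 0) := by
      rw [refRep_simple, refPerm_apply]
      have : (s j * t * s j : W) = t' := by
        rw [htdef, ← mul_assoc, ← mul_assoc, cs.simple_mul_simple_self, one_mul,
          mul_assoc, cs.simple_mul_simple_self, mul_one]
      rw [this]
    have s2 : refRep cs t' (t', (0 + if t = s j then 1 else 0 : ZMod 2))
        = (t', (0 + if t = s j then 1 else 0 : ZMod 2) + 1) := by
      rw [refRep_apply, ih, show (t' * t' * t'⁻¹ : W) = t' from by group]
    have s3 : refRep cs (s j) (t', ((0 + if t = s j then 1 else 0 : ZMod 2) + 1))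
        = (t, ((0 + if t = s j then 1 else 0 : ZMod 2) + 1)
            + if t' = s j then 1 else 0) := by
      rw [refRep_simple, refPerm_apply]
    have hcond : (t = s j) ↔ (t' = s j) := by
      rw [htdef]; exact simple_conj_eq_simple_iff cs j t'
    rw [refParity, hrep, s1, s2, s3]
    dsimp only
    by_cases h : t' = s j
    · rw [if_pos h, if_pos (hcond.mpr h)]; decide
    · rw [if_neg h, if_neg (fun hh => h (hcond.mp hh))]; decide

theorem refParity_eq_zero_of_not_inversion {w t : W} (ht : cs.IsReflection t)
    (h : ¬ ℓ (w * t) < ℓ w) : refParity cs w t = 0 := by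
  obtain ⟨ω, hred, rfl⟩ := cs.exists_reduced_word' w
  rw [refParity_eq_count]
  have : t ∉ ris ω := by
    intro hmem
    exact h (cs.isRightInversion_of_mem_rightInvSeq hred hmem).2
  rw [List.count_eq_zero_of_not_mem this]
  rfl

theorem refParity_eq_one_of_inversion {w t : W} (ht : cs.IsRightInversion w t) :
    refParity cs w t = 1 := by
  have hw : w = (w * t) * t := by
    rw [mul_assoc, IsReflection.mul_self ht.1, mul_one]
  rw [hw, refParity_mul]
  have h1 : (t * t * t⁻¹ : W) = t := by
    rw [IsReflection.mul_self ht.1, one_mul, IsReflection.inv ht.1]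
  rw [h1, refParity_self cs t ht.1]
  have h0 : refParity cs (w * t) t = 0 := by
    apply refParity_eq_zero_of_not_inversion cs ht.1
    rw [mul_assoc, IsReflection.mul_self ht.1, mul_one]
    have := ht.2
    omega
  rw [h0, add_zero]

/-- Strong exchange: membership form. -/
theorem mem_rightInvSeq_of_isRightInversion {ω : List B} (hred : cs.IsReduced ω) {t : W}
    (ht : cs.IsRightInversion (π ω) t) : t ∈ ris ω := by
  have h1 : refParity cs (π ω) t = 1 := refParity_eq_one_of_inversion cs ht
  rw [refParity_eq_count] at h1
  by_contra hmem
  rw [List.count_eq_zero_of_not_mem hmem] at h1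
  exact absurd h1 (by decide)

/-- Strong exchange property. -/
theorem strongExchange {ω : List B} (hred : cs.IsReduced ω) {t : W}
    (ht : cs.IsRightInversion (π ω) t) :
    ∃ j < ω.length, π ω * t = π (ω.eraseIdx j) := by
  have hmem : t ∈ ris ω := mem_rightInvSeq_of_isRightInversion cs hred ht
  obtain ⟨j, hj, hjt⟩ := List.mem_iff_getElem.mp hmem
  rw [cs.length_rightInvSeq] at hj
  refine ⟨j, hj, ?_⟩
  rw [← cs.wordProd_mul_getD_rightInvSeq ω j]
  congr 1
  rw [List.getD_eq_getElem _ 1 (by rw [cs.length_rightInvSeq]; exact hj)]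
  exact hjt.symm

end

end KMChev




namespace KMChev

open CoxeterSystem List

noncomputable section

variable {B W : Type*} [Group W] {M : CoxeterMatrix B} (cs : CoxeterSystem M W)

local prefix:100 "s" => cs.simple
local prefix:100 "π" => cs.wordProd
local prefix:100 "ℓ" => cs.length


theorem BruhatLE.trans {v w x : W} (h1 : BruhatLE cs v w) (h2 : BruhatLE cs w x) :
    BruhatLE cs v x := Relation.ReflTransGen.trans h1 h2

theorem BruhatLE.refl (v : W) : BruhatLE cs v v := Relation.ReflTransGen.refl

theorem BruhatLE.of_cov {v w : W} (h : BruhatCov cs v w) : BruhatLE cs v w :=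
  Relation.ReflTransGen.single h

theorem BruhatLE.length_le {v w : W} (h : BruhatLE cs v w) : ℓ v ≤ ℓ w := by
  induction h with
  | refl => exact le_refl _
  | tail _ hcov ih =>
    have := hcov.2
    omega

theorem BruhatLE.length_lt {v w : W} (h : BruhatLE cs v w) (hne : v ≠ w) : ℓ v < ℓ w := by
  rcases Relation.ReflTransGen.cases_tail h with rfl | ⟨u, hvu, hcov⟩
  · exact absurd rfl hne
  · have := BruhatLE.length_le cs hvu
    have := hcov.2
    omega

theorem BruhatLE.eq_of_length_ge {v w : W} (h : BruhatLE cs v w) (hl : ℓ w ≤ ℓ v) : v = w := by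
  by_contra hne
  have := BruhatLE.length_lt cs h hne
  omega

/-- Covering by left multiplication by a simple reflection. -/
theorem cov_simple_mul {v : W} {i : B} (h : ℓ (s i * v) = ℓ v + 1) :
    BruhatCov cs v (s i * v) := by
  refine ⟨⟨v⁻¹ * s i * v, ⟨v⁻¹, i, by rw [inv_inv]⟩, ?_⟩, h⟩
  rw [← mul_assoc, ← mul_assoc, mul_inv_cancel, one_mul]

theorem le_simple_mul {v : W} {i : B} (h : ℓ v < ℓ (s i * v)) :
    BruhatLE cs v (s i * v) := by
  rcases cs.length_simple_mul v i with h' | h'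
  · exact BruhatLE.of_cov cs (cov_simple_mul cs h')
  · omega

theorem simple_mul_le {v : W} {i : B} (h : ℓ (s i * v) < ℓ v) :
    BruhatLE cs (s i * v) v := by
  have h2 : ℓ (s i * (s i * v)) = ℓ (s i * v) + 1 := by
    rw [cs.simple_mul_simple_cancel_left]
    rcases cs.length_simple_mul v i with h' | h'
    · omega
    · omega
  have := BruhatLE.of_cov cs (cov_simple_mul cs h2)
  rwa [cs.simple_mul_simple_cancel_left] at this

private def Pst (n : ℕ) : Prop := ∀ w : W, ℓ w ≤ n → ∀ (i : B) (v : W),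
  ℓ (s i * w) < ℓ w → ℓ v < ℓ (s i * v) → BruhatLE cs v w →
    BruhatLE cs (s i * v) w ∧ BruhatLE cs v (s i * w)

private def Cst (n : ℕ) : Prop := ∀ u : W, ℓ u ≤ n → ∀ (i : B) (v : W),
  ℓ u < ℓ (s i * u) → ℓ v < ℓ (s i * v) → BruhatLE cs v u →
    BruhatLE cs (s i * v) (s i * u)

private theorem liftPC : ∀ n : ℕ, Pst cs n ∧ Cst cs n := by
  intro n
  induction n using Nat.strong_induction_on with
  | _ n IH =>
  constructor
  · -- Pst n
    intro w hwn i v hsw hv hle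
    rcases Relation.ReflTransGen.cases_tail hle with rfl | ⟨u, hvu, hcov⟩
    · omega
    · obtain ⟨⟨t, htrefl, hwut⟩, hlen⟩ := hcov
      have hswl : ℓ (s i * w) + 1 = ℓ w := by
        rcases cs.length_simple_mul w i with h' | h' <;> omega
      have hun : ℓ u < n := by omega
      by_cases hsu : ℓ (s i * u) < ℓ u
      · obtain ⟨h1, h2⟩ := (IH (ℓ u) hun).1 u le_rfl i v hsu hv hvu
        have hsul : ℓ (s i * u) + 1 = ℓ u := by
          rcases cs.length_simple_mul u i with h' | h' <;> omega
        constructor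
        · exact BruhatLE.trans cs h1 (BruhatLE.of_cov cs ⟨⟨t, htrefl, hwut⟩, hlen⟩)
        · refine BruhatLE.trans cs h2 (BruhatLE.of_cov cs ⟨⟨t, htrefl, ?_⟩, ?_⟩)
          · rw [hwut, mul_assoc]
          · omega
      · have hsu' : ℓ u < ℓ (s i * u) := by
          rcases cs.length_simple_mul u i with h' | h' <;> omega
        have hsul' : ℓ (s i * u) = ℓ u + 1 := by
          rcases cs.length_simple_mul u i with h' | h' <;> omega
        -- show s i * u = w
        have hsuw : s i * u = w := by
          by_contra hne
          obtain ⟨γ, hγlen, hγ⟩ := cs.exists_reduced_word u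
          have hγlen' : ℓ u = γ.length := by rw [hγ]; exact hγlen
          have hred : cs.IsReduced (i :: γ) := by
            show ℓ (π (i :: γ)) = (i :: γ).length
            rw [cs.wordProd_cons, ← hγ]
            simp only [List.length_cons]
            omega
          have hinv : cs.IsRightInversion (π (i :: γ)) t := by
            refine ⟨htrefl, ?_⟩
            rw [cs.wordProd_cons, ← hγ, mul_assoc, ← hwut]
            have h1 : ℓ (s i * w) + 1 = ℓ w := hswl
            have h2 : ℓ (s i * u) = ℓ u + 1 := by omega
            omega
          obtain ⟨j, hj, heq⟩ := strongExchange cs hred hinv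
          rw [cs.wordProd_cons, ← hγ, mul_assoc, ← hwut] at heq
          match j, hj with
          | 0, _ =>
            rw [List.eraseIdx_cons_zero, ← hγ] at heq
            apply hne
            have : w = s i * (s i * w) := by rw [cs.simple_mul_simple_cancel_left]
            rw [this, heq]
          | (k+1), hj =>
            rw [List.eraseIdx_cons_succ, cs.wordProd_cons] at heq
            have hw2 : w = π (γ.eraseIdx k) := by
              have := congrArg (fun z => s i * z) heq
              rwa [cs.simple_mul_simple_cancel_left, cs.simple_mul_simple_cancel_left] at this
            have hklen : k < γ.length := by
              simp only [List.length_cons] at hj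
              omega
            have : ℓ w ≤ (γ.eraseIdx k).length := hw2 ▸ cs.length_wordProd_le _
            rw [List.length_eraseIdx_of_lt hklen] at this
            omega
        constructor
        · rw [← hsuw]
          exact (IH (ℓ u) hun).2 u le_rfl i v hsu' hv hvu
        · have : s i * w = u := by rw [← hsuw, cs.simple_mul_simple_cancel_left]
          rw [this]
          exact hvu
  · -- Cst n
    intro u hun i v hsu hv hle
    rcases Relation.ReflTransGen.cases_tail hle with rfl | ⟨x, hvx, hcov⟩
    · exact BruhatLE.refl cs _
    · obtain ⟨⟨t, htrefl, huxt⟩, hlen⟩ := hcov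
      have hxn : ℓ x < n := by omega
      have hsul : ℓ (s i * u) = ℓ u + 1 := by
        rcases cs.length_simple_mul u i with h' | h' <;> omega
      by_cases hsx : ℓ x < ℓ (s i * x)
      · have h1 := (IH (ℓ x) hxn).2 x le_rfl i v hsx hv hvx
        have hsxl : ℓ (s i * x) = ℓ x + 1 := by
          rcases cs.length_simple_mul x i with h' | h' <;> omega
        refine BruhatLE.trans cs h1 (BruhatLE.of_cov cs ⟨⟨t, htrefl, ?_⟩, ?_⟩)
        · rw [huxt, mul_assoc]
        · omega
      · have hsx' : ℓ (s i * x) < ℓ x := by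
          rcases cs.length_simple_mul x i with h' | h' <;> omega
        obtain ⟨h1, -⟩ := (IH (ℓ x) hxn).1 x le_rfl i v hsx' hv hvx
        refine BruhatLE.trans cs h1 (BruhatLE.trans cs
          (BruhatLE.of_cov cs ⟨⟨t, htrefl, huxt⟩, hlen⟩) (le_simple_mul cs hsu))

theorem bruhat_lift_descent {w v : W} {i : B} (hsw : ℓ (s i * w) < ℓ w)
    (hv : ℓ v < ℓ (s i * v)) (hle : BruhatLE cs v w) :
    BruhatLE cs (s i * v) w ∧ BruhatLE cs v (s i * w) :=
  (liftPC cs (ℓ w)).1 w le_rfl i v hsw hv hle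

theorem bruhat_lift_ascent {u v : W} {i : B} (hsu : ℓ u < ℓ (s i * u))
    (hv : ℓ v < ℓ (s i * v)) (hle : BruhatLE cs v u) :
    BruhatLE cs (s i * v) (s i * u) :=
  (liftPC cs (ℓ u)).2 u le_rfl i v hsu hv hle

end

end KMChev




namespace KMChev

open CoxeterSystem List

noncomputable section

variable {B W : Type*} [Group W] {M : CoxeterMatrix B} (cs : CoxeterSystem M W)

local prefix:100 "s" => cs.simple
local prefix:100 "π" => cs.wordProd
local prefix:100 "ℓ" => cs.length


/-- Deletion property: every word has a reduced sublist with the same product. -/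
theorem exists_reduced_sublist (ω : List B) :
    ∃ ω', ω' <+ ω ∧ π ω' = π ω ∧ cs.IsReduced ω' := by
  induction ω using List.reverseRecOn with
  | nil => exact ⟨[], List.Sublist.refl _, rfl, by show cs.length (cs.wordProd []) = _; simp⟩
  | append_singleton ω₀ i IH =>
    obtain ⟨ρ, hsub, hprod, hred⟩ := IH
    rcases cs.length_mul_simple (π ρ) i with h' | h'
    · refine ⟨ρ ++ [i], hsub.append (List.Sublist.refl _), ?_, ?_⟩
      · rw [cs.wordProd_append, cs.wordProd_append, hprod]
      · show ℓ (π (ρ ++ [i])) = _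
        rw [cs.wordProd_append, cs.wordProd_singleton, h', List.length_append,
          List.length_singleton, hred]
    · have hinv : cs.IsRightInversion (π ρ) (s i) := by
        refine ⟨cs.isReflection_simple i, ?_⟩
        omega
      obtain ⟨k, hk, heq⟩ := strongExchange cs hred hinv
      refine ⟨ρ.eraseIdx k, ?_, ?_, ?_⟩
      · exact ((ρ.eraseIdx_sublist k).trans hsub).trans (List.sublist_append_left ω₀ [i])
      · rw [← heq, cs.wordProd_append, cs.wordProd_singleton, hprod]
      · show ℓ (π (ρ.eraseIdx k)) = _
        rw [← heq]
        have h1 := List.length_eraseIdx_add_one hk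
        have h2 : ℓ (π ρ) = ρ.length := hred
        omega

theorem wordProd_mem_WJ {J : Set B} {ω : List B} (h : ∀ b ∈ ω, b ∈ J) :
    π ω ∈ WJ cs J := by
  induction ω with
  | nil => exact (WJ cs J).one_mem
  | cons j ω ih =>
    rw [cs.wordProd_cons]
    exact (WJ cs J).mul_mem
      (Subgroup.subset_closure ⟨j, h j List.mem_cons_self, rfl⟩)
      (ih (fun b hb => h b (List.mem_cons_of_mem _ hb)))

theorem exists_J_word {J : Set B} {c : W} (hc : c ∈ WJ cs J) :
    ∃ ω : List B, (∀ b ∈ ω, b ∈ J) ∧ π ω = c := by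
  induction hc using Subgroup.closure_induction with
  | mem x hx =>
    obtain ⟨j, hj, rfl⟩ := hx
    exact ⟨[j], by simpa using hj, cs.wordProd_singleton j⟩
  | one => exact ⟨[], by simp, rfl⟩
  | mul x y _ _ ihx ihy =>
    obtain ⟨ω₁, h1, rfl⟩ := ihx
    obtain ⟨ω₂, h2, rfl⟩ := ihy
    exact ⟨ω₁ ++ ω₂, fun b hb => by
      rcases List.mem_append.mp hb with h | h
      exacts [h1 b h, h2 b h], cs.wordProd_append ω₁ ω₂⟩
  | inv x _ ihx =>
    obtain ⟨ω₁, h1, rfl⟩ := ihx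
    exact ⟨ω₁.reverse, fun b hb => h1 b (List.mem_reverse.mp hb), cs.wordProd_reverse ω₁⟩

theorem exists_reduced_J_word {J : Set B} {c : W} (hc : c ∈ WJ cs J) :
    ∃ ω : List B, (∀ b ∈ ω, b ∈ J) ∧ π ω = c ∧ cs.IsReduced ω := by
  obtain ⟨ω, hJ, hprod⟩ := exists_J_word cs hc
  obtain ⟨ω', hsub, hprod', hred⟩ := exists_reduced_sublist cs ω
  exact ⟨ω', fun b hb => hJ b (hsub.subset hb), hprod'.trans hprod, hred⟩

/-- Each coset has an element of minimal length. -/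
theorem exists_min_in_coset (J : Set B) (τ : W ⧸ WJ cs J) :
    ∃ u : W, QuotientGroup.mk u = τ ∧
      ∀ z : W, (QuotientGroup.mk z : W ⧸ WJ cs J) = τ → ℓ u ≤ ℓ z := by
  classical
  obtain ⟨x, rfl⟩ := QuotientGroup.mk_surjective τ
  have hex : ∃ n : ℕ, ∃ z : W,
      (QuotientGroup.mk z : W ⧸ WJ cs J) = QuotientGroup.mk x ∧ ℓ z = n :=
    ⟨ℓ x, x, rfl, rfl⟩
  obtain ⟨u, hu, hlen⟩ := Nat.find_spec hex
  refine ⟨u, hu, fun z hz => ?_⟩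
  rw [hlen]
  exact Nat.find_le ⟨z, hz, rfl⟩

/-- Length additivity for a minimal length coset representative. -/
theorem min_length_add {J : Set B} {u : W}
    (hmin : ∀ z : W, (QuotientGroup.mk z : W ⧸ WJ cs J) = QuotientGroup.mk u → ℓ u ≤ ℓ z) :
    ∀ c ∈ WJ cs J, ℓ (u * c) = ℓ u + ℓ c := by
  suffices h : ∀ n : ℕ, ∀ c ∈ WJ cs J, ℓ c ≤ n → ℓ (u * c) = ℓ u + ℓ c by
    intro c hc
    exact h (ℓ c) c hc le_rfl
  intro n
  induction n using Nat.strong_induction_on with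
  | _ n IHn =>
  intro c hc hcn
  obtain ⟨ω, hJ, hprod, hred⟩ := exists_reduced_J_word cs hc
  rcases ω.eq_nil_or_concat' with rfl | ⟨ω', j, rfl⟩
  · simp only [wordProd_nil] at hprod
    rw [← hprod]
    simp
  · -- c = c₁ * s j
    have hred' : cs.IsReduced ω' := by
      have := CoxeterSystem.IsReduced.take hred ω'.length
      rwa [List.take_append_of_le_length le_rfl, List.take_length] at this
    set c₁ : W := π ω' with hc₁
    have hc1J : c₁ ∈ WJ cs J :=
      wordProd_mem_WJ cs (fun b hb => hJ b (List.mem_append_left _ hb))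
    have hceq : c = c₁ * s j := by
      rw [← hprod, cs.wordProd_append, cs.wordProd_singleton]
    have hlc : ℓ c = ω'.length + 1 := by
      rw [← hprod, hred]
      simp
    have hlc₁ : ℓ c₁ = ω'.length := hred'
    have hjJ : j ∈ J := hJ j (List.mem_append_right _ (List.mem_singleton.mpr rfl))
    have IH1 : ℓ (u * c₁) = ℓ u + ℓ c₁ := by
      apply IHn (ℓ c₁) (by omega) c₁ hc1J le_rfl
    rw [hceq, ← mul_assoc]
    rcases cs.length_mul_simple (u * c₁) j with h' | h'
    · rw [h', IH1, hlc₁]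
      have : ℓ (c₁ * s j) = ω'.length + 1 := by rw [← hceq]; omega
      omega
    · -- contradiction via strong exchange
      exfalso
      obtain ⟨α, hαlen, hα⟩ := cs.exists_reduced_word u
      have hαlen' : ℓ u = α.length := by rw [hα]; exact hαlen
      have hαred : cs.IsReduced α := by
        show ℓ (π α) = α.length
        rw [← hα, hαlen']
      have hword : π (α ++ ω') = u * c₁ := by
        rw [cs.wordProd_append, ← hα, hc₁]
      have hredαω : cs.IsReduced (α ++ ω') := by
        show ℓ (π (α ++ ω')) = (α ++ ω').length
        rw [hword, IH1, List.length_append, hαlen', hlc₁]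
      have hinv : cs.IsRightInversion (π (α ++ ω')) (s j) := by
        refine ⟨cs.isReflection_simple j, ?_⟩
        rw [hword]
        omega
      obtain ⟨k, hk, heq⟩ := strongExchange cs hredαω hinv
      rw [hword, List.eraseIdx_eq_take_drop_succ] at heq
      by_cases hkα : k < α.length
      · -- erased in the α part
        rw [List.take_append_of_le_length (le_of_lt hkα),
          List.drop_append_of_le_length (by omega), cs.wordProd_append, cs.wordProd_append,
          ← mul_assoc, ← cs.wordProd_append, ← List.eraseIdx_eq_take_drop_succ] at heq
        set u₁ : W := π (α.eraseIdx k) with hu₁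
        have hu₁eq : u * (c₁ * s j * c₁⁻¹) = u₁ := by
          have := congrArg (fun z => z * c₁⁻¹) heq
          rw [mul_inv_cancel_right] at this
          rw [← this]
          group
        have hmem : c₁ * s j * c₁⁻¹ ∈ WJ cs J :=
          (WJ cs J).mul_mem ((WJ cs J).mul_mem hc1J
            (Subgroup.subset_closure ⟨j, hjJ, rfl⟩)) ((WJ cs J).inv_mem hc1J)
        have hmk : (QuotientGroup.mk u₁ : W ⧸ WJ cs J) = QuotientGroup.mk u := by
          rw [← hu₁eq]
          exact QuotientGroup.mk_mul_of_mem u hmem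
        have hle := hmin u₁ hmk
        have hlu₁ : ℓ u₁ ≤ (α.eraseIdx k).length := cs.length_wordProd_le _
        have := List.length_eraseIdx_add_one hkα
        omega
      · -- erased in the ω' part
        push_neg at hkα
        rw [List.take_append, List.drop_append,
          List.take_of_length_le hkα, List.drop_of_length_le (by omega), List.nil_append,
          cs.wordProd_append, cs.wordProd_append, ← hα, mul_assoc, mul_assoc] at heq
        have hcancel : c₁ * s j = π (ω'.take (k - α.length) ++ ω'.drop (k + 1 - α.length)) := by
          rw [cs.wordProd_append]
          exact mul_left_cancel heq
        have h1 : ℓ (c₁ * s j) ≤ (ω'.take (k - α.length) ++ ω'.drop (k + 1 - α.length)).length := by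
          rw [hcancel]
          exact cs.length_wordProd_le _
        have h2 : k + 1 - α.length = (k - α.length) + 1 := by omega
        have h3 : (ω'.take (k - α.length) ++ ω'.drop (k + 1 - α.length)) =
            ω'.eraseIdx (k - α.length) := by
          rw [h2, ← List.eraseIdx_eq_take_drop_succ]
        have hklen : k - α.length < ω'.length := by
          rw [List.length_append] at hk
          omega
        rw [h3, List.length_eraseIdx_of_lt hklen] at h1
        have : ℓ (c₁ * s j) = ℓ c := by rw [hceq]
        omega

theorem min_mem_MinRep {J : Set B} {u : W}
    (hmin : ∀ z : W, (QuotientGroup.mk z : W ⧸ WJ cs J) = QuotientGroup.mk u → ℓ u ≤ ℓ z) :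
    u ∈ MinRep cs J := by
  intro j hj
  have h1 : ℓ (u * s j) = ℓ u + ℓ (s j) :=
    min_length_add cs hmin (s j) (Subgroup.subset_closure ⟨j, hj, rfl⟩)
  rw [cs.length_simple] at h1
  omega

theorem minrep_eq_min {J : Set B} {u x : W}
    (hmin : ∀ z : W, (QuotientGroup.mk z : W ⧸ WJ cs J) = QuotientGroup.mk u → ℓ u ≤ ℓ z)
    (hx : x ∈ MinRep cs J)
    (hmk : (QuotientGroup.mk x : W ⧸ WJ cs J) = QuotientGroup.mk u) : x = u := by
  have hc : u⁻¹ * x ∈ WJ cs J := QuotientGroup.eq.mp hmk.symm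
  set c : W := u⁻¹ * x with hcdef
  have hx2 : x = u * c := by rw [hcdef, ← mul_assoc, mul_inv_cancel, one_mul]
  obtain ⟨ω, hJ, hprod, hred⟩ := exists_reduced_J_word cs hc
  rcases ω.eq_nil_or_concat' with rfl | ⟨ω', j, rfl⟩
  · simp only [wordProd_nil] at hprod
    rw [hx2, ← hprod, mul_one]
  · exfalso
    have hjJ : j ∈ J := hJ j (List.mem_append_right _ (List.mem_singleton.mpr rfl))
    have hc1J : π ω' ∈ WJ cs J :=
      wordProd_mem_WJ cs (fun b hb => hJ b (List.mem_append_left _ hb))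
    have hred' : cs.IsReduced ω' := by
      have := CoxeterSystem.IsReduced.take hred ω'.length
      rwa [List.take_append_of_le_length le_rfl, List.take_length] at this
    have hxj : x * s j = u * π ω' := by
      rw [hx2, ← hprod, cs.wordProd_append, cs.wordProd_singleton, mul_assoc, mul_assoc,
        cs.simple_mul_simple_self, mul_one]
    have h1 : ℓ (x * s j) = ℓ u + ω'.length := by
      rw [hxj, min_length_add cs hmin _ hc1J, hred']
    have h2 : ℓ x = ℓ u + (ω'.length + 1) := by
      rw [hx2, min_length_add cs hmin _ hc, ← hprod, hred]
      simp
    have := hx j hjJ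
    omega

theorem descent_propagation {J : Set B} {u : W}
    (hmin : ∀ z : W, (QuotientGroup.mk z : W ⧸ WJ cs J) = QuotientGroup.mk u → ℓ u ≤ ℓ z)
    {i : B} (hdesc : ℓ (s i * u) < ℓ u) :
    ∀ x : W, (QuotientGroup.mk x : W ⧸ WJ cs J) = QuotientGroup.mk u → ℓ (s i * x) < ℓ x := by
  intro x hmk
  have hc : u⁻¹ * x ∈ WJ cs J := QuotientGroup.eq.mp hmk.symm
  set c : W := u⁻¹ * x with hcdef
  have hx2 : x = u * c := by rw [hcdef, ← mul_assoc, mul_inv_cancel, one_mul]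
  have h1 : ℓ x = ℓ u + ℓ c := by rw [hx2]; exact min_length_add cs hmin c hc
  have h2 : ℓ (s i * x) ≤ ℓ (s i * u) + ℓ c := by
    rw [hx2, ← mul_assoc]
    exact cs.length_mul_le _ _
  omega

theorem ascent_minrep {J : Set B} {u : W}
    (hmin : ∀ z : W, (QuotientGroup.mk z : W ⧸ WJ cs J) = QuotientGroup.mk u → ℓ u ≤ ℓ z)
    {i : B} (hasc : ℓ u < ℓ (s i * u))
    (hne : (QuotientGroup.mk (s i * u) : W ⧸ WJ cs J) ≠ QuotientGroup.mk u) :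
    (s i * u) ∈ MinRep cs J := by
  intro j hjJ
  by_contra hnd
  have hsul : ℓ (s i * u) = ℓ u + 1 := by
    rcases cs.length_simple_mul u i with h' | h' <;> omega
  have hdown : ℓ (s i * u * s j) < ℓ (s i * u) := by
    rcases cs.length_mul_simple (s i * u) j with h' | h' <;> omega
  obtain ⟨γ, hγlen, hγ⟩ := cs.exists_reduced_word u
  have hγlen' : ℓ u = γ.length := by rw [hγ]; exact hγlen
  have hredi : cs.IsReduced (i :: γ) := by
    show ℓ (π (i :: γ)) = (i :: γ).length
    rw [cs.wordProd_cons, ← hγ, List.length_cons]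
    omega
  have hinv : cs.IsRightInversion (π (i :: γ)) (s j) := by
    refine ⟨cs.isReflection_simple j, ?_⟩
    rw [cs.wordProd_cons, ← hγ]
    exact hdown
  obtain ⟨k, hk, heq⟩ := strongExchange cs hredi hinv
  rw [cs.wordProd_cons, ← hγ] at heq
  match k, hk with
  | 0, _ =>
    rw [List.eraseIdx_cons_zero, ← hγ] at heq
    -- s i * u * s j = u, so s i * u = u * s j
    apply hne
    have h2 : s i * u = u * s j := by
      have := congrArg (fun z => z * s j) heq
      rwa [mul_assoc, cs.simple_mul_simple_self, mul_one] at this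
    rw [h2]
    exact QuotientGroup.mk_mul_of_mem u (Subgroup.subset_closure ⟨j, hjJ, rfl⟩)
  | (k+1), hk =>
    rw [List.eraseIdx_cons_succ, cs.wordProd_cons] at heq
    have h2 : u * s j = π (γ.eraseIdx k) := by
      have := congrArg (fun z => s i * z) heq
      rwa [← mul_assoc, ← mul_assoc, cs.simple_mul_simple_self, one_mul,
        ← mul_assoc, cs.simple_mul_simple_self, one_mul] at this
    have hklen : k < γ.length := by
      simp only [List.length_cons] at hk
      omega
    have h3 : ℓ (u * s j) ≤ (γ.eraseIdx k).length := h2 ▸ cs.length_wordProd_le _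
    rw [List.length_eraseIdx_of_lt hklen] at h3
    have h4 : (QuotientGroup.mk (u * s j) : W ⧸ WJ cs J) = QuotientGroup.mk u :=
      QuotientGroup.mk_mul_of_mem u (Subgroup.subset_closure ⟨j, hjJ, rfl⟩)
    have := hmin _ h4
    omega

end

end KMChev


namespace KMChev

open CoxeterSystem List

noncomputable section

variable {B W : Type*} [Group W] {M : CoxeterMatrix B} (cs : CoxeterSystem M W)

local prefix:100 "s" => cs.simple
local prefix:100 "π" => cs.wordProd
local prefix:100 "ℓ" => cs.length

theorem lift_right_aux (J : Set B) (i : B) (v y w : W) (τ : W ⧸ WJ cs J)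
    (hv : BruhatLT cs v (cs.simple i * v))
    (hvτ : CosetLE cs J (QuotientGroup.mk (cs.simple i * v)) τ)
    (hττ : CosetLE cs J (cs.simple i • τ) τ)
    (hy : (BruhatLE cs (cs.simple i * v) y ∧ (QuotientGroup.mk y : W ⧸ WJ cs J) = τ) ∧
      ∀ x : W, BruhatLE cs (cs.simple i * v) x →
        (QuotientGroup.mk x : W ⧸ WJ cs J) = τ → BruhatLE cs y x)
    (hw : (BruhatLE cs v w ∧ (QuotientGroup.mk w : W ⧸ WJ cs J) = τ) ∧
      ∀ x : W, BruhatLE cs v x → (QuotientGroup.mk x : W ⧸ WJ cs J) = τ →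
        BruhatLE cs w x) :
    y = w ∨ (y = cs.simple i * w ∧ BruhatLT cs w (cs.simple i * w) ∧
      cs.simple i • τ = τ) := by
  obtain ⟨⟨hsvy, hymk⟩, hymin⟩ := hy
  obtain ⟨⟨hvw, hwmk⟩, hwmin⟩ := hw
  have hvlen : ℓ v < ℓ (s i * v) := BruhatLE.length_lt cs hv.1 hv.2
  have hwy : BruhatLE cs w y := hwmin y (BruhatLE.trans cs hv.1 hsvy) hymk
  by_cases hsvw : BruhatLE cs (s i * v) w
  · left
    exact BruhatLE.eq_of_length_ge cs (hymin w hsvw hwmk) (BruhatLE.length_le cs hwy)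
  · right
    have hwsw : ℓ w < ℓ (s i * w) := by
      by_contra hns
      have h1 : ℓ (s i * w) < ℓ w := by
        rcases cs.length_simple_mul w i with h' | h' <;> omega
      exact hsvw (bruhat_lift_descent cs h1 hvlen hvw).1
    have hlsw : ℓ (s i * w) = ℓ w + 1 := by
      rcases cs.length_simple_mul w i with h' | h' <;> omega
    have hsvsw : BruhatLE cs (s i * v) (s i * w) := bruhat_lift_ascent cs hwsw hvlen hvw
    obtain ⟨u, humk, humin⟩ := exists_min_in_coset cs J τ
    have humin' : ∀ z : W, (QuotientGroup.mk z : W ⧸ WJ cs J) = QuotientGroup.mk u →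
        ℓ u ≤ ℓ z := fun z hz => humin z (hz.trans humk)
    have hstau : cs.simple i • τ = τ := by
      by_contra hneq
      obtain ⟨a, b, haM, hbM, hamk, hbmk, hab⟩ := hττ
      have hdesc : ℓ (s i * u) < ℓ u := by
        by_contra hnd
        have hasc : ℓ u < ℓ (s i * u) := by
          rcases cs.length_simple_mul u i with h' | h' <;> omega
        have hmkne : (QuotientGroup.mk (s i * u) : W ⧸ WJ cs J) ≠ QuotientGroup.mk u := by
          intro hcontra
          apply hneq
          have h1 : cs.simple i • τ = QuotientGroup.mk (s i * u) := by
            rw [← humk]; rfl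
          rw [h1, hcontra, humk]
        have hmem : (s i * u) ∈ MinRep cs J := ascent_minrep cs humin' hasc hmkne
        obtain ⟨u', hu'mk, hu'min⟩ := exists_min_in_coset cs J (cs.simple i • τ)
        have hu'min' : ∀ z : W, (QuotientGroup.mk z : W ⧸ WJ cs J) = QuotientGroup.mk u' →
            ℓ u' ≤ ℓ z := fun z hz => hu'min z (hz.trans hu'mk)
        have hsiumk : (QuotientGroup.mk (s i * u) : W ⧸ WJ cs J) = QuotientGroup.mk u' := by
          rw [hu'mk, ← humk]; rfl
        have h1 : s i * u = u' := minrep_eq_min cs hu'min' hmem hsiumk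
        have h2 : a = u' := minrep_eq_min cs hu'min' haM (hamk.trans hu'mk.symm)
        have h3 : ℓ a ≤ ℓ b := BruhatLE.length_le cs hab
        have h4 : b = u := minrep_eq_min cs humin' hbM (hbmk.trans humk.symm)
        rw [h2, ← h1] at h3
        rw [h4] at h3
        omega
      have := descent_propagation cs humin' hdesc w (hwmk.trans humk.symm)
      omega
    have hmksw : (QuotientGroup.mk (s i * w) : W ⧸ WJ cs J) = τ := by
      have h1 : (QuotientGroup.mk (s i * w) : W ⧸ WJ cs J)
          = cs.simple i • (QuotientGroup.mk w : W ⧸ WJ cs J) := rfl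
      rw [h1, hwmk, hstau]
    have hysw : BruhatLE cs y (s i * w) := hymin _ hsvsw hmksw
    have hyne : y ≠ w := fun h => hsvw (h ▸ hsvy)
    have hlwy : ℓ w < ℓ y := BruhatLE.length_lt cs hwy (fun h => hyne h.symm)
    have hyeq : y = s i * w := by
      apply BruhatLE.eq_of_length_ge cs hysw
      have := BruhatLE.length_le cs hysw
      omega
    refine ⟨hyeq, ⟨le_simple_mul cs hwsw, fun h => ?_⟩, hstau⟩
    have := congrArg cs.length h
    omega

end

end KMChev

namespace KMChev

/-- suppose `v < sv`, `svW_J ≤ τ`, and `sτ ≤ τ`. Let `y = up(sv, τ)`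
and `w = up(v, τ)`. Then `y = w`, or `y = sw > w`; the latter only if `sτ = τ`. -/
theorem lift_right {B W : Type*} [Group W] {M : CoxeterMatrix B}
    (cs : CoxeterSystem M W) (J : Set B) (i : B) (v y w : W) (τ : W ⧸ WJ cs J)
    (hv : BruhatLT cs v (cs.simple i * v))
    (hvτ : CosetLE cs J (QuotientGroup.mk (cs.simple i * v)) τ)
    (hττ : CosetLE cs J (cs.simple i • τ) τ)
    (hy : (BruhatLE cs (cs.simple i * v) y ∧ (QuotientGroup.mk y : W ⧸ WJ cs J) = τ) ∧
      ∀ x : W, BruhatLE cs (cs.simple i * v) x →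
        (QuotientGroup.mk x : W ⧸ WJ cs J) = τ → BruhatLE cs y x)
    (hw : (BruhatLE cs v w ∧ (QuotientGroup.mk w : W ⧸ WJ cs J) = τ) ∧
      ∀ x : W, BruhatLE cs v x → (QuotientGroup.mk x : W ⧸ WJ cs J) = τ →
        BruhatLE cs w x) :
    y = w ∨ (y = cs.simple i * w ∧ BruhatLT cs w (cs.simple i * w) ∧
      cs.simple i • τ = τ) := by
  exact lift_right_aux cs J i v y w τ hv hvτ hττ hy hw

end KMChev
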